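/- Let C be an F_q-linear code of length n, where q = r^h. Then the dual of the subfield subcode C ∩ F_r^n (as an F_r-linear code) equals the trace code Tr(C^⊥), where Tr: F_q → F_r is the field trace extended componentwise. (Delsarte's theorem) -/

import Mathlib

/-- The standard dot-product bilinear form on `Fin n → K`. -/
noncomputable def delsarteDotB (K : Type) [Field K] (n : ℕ) :
    LinearMap.BilinForm K (Fin n → K) :=
  LinearMap.mk₂ K (fun x y => ∑ i, x i * y i)
    (fun x x' y => by simp [add_mul, Finset.sum_add_distrib])
    (fun a x y => by simp [Finset.mul_sum, mul_assoc])
    (fun x y y' => by simp [mul_add, Finset.sum_add_distrib])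
    (fun a x y => by simp [Finset.mul_sum, mul_left_comm])

lemma delsarteDotB_apply (K : Type) [Field K] (n : ℕ) (x y : Fin n → K) :
    delsarteDotB K n x y = ∑ i, x i * y i := rfl

lemma delsarteDotB_nondeg (K : Type) [Field K] (n : ℕ) :
    (delsarteDotB K n).Nondegenerate := by
  refine (LinearMap.IsRefl.nondegenerate_iff_separatingLeft (B := delsarteDotB K n)
    (fun x y hxy => by simpa [delsarteDotB_apply, mul_comm] using hxy)).mpr ?_
  intro x hx
  funext i
  have := hx (Pi.single i 1)
  simpa [delsarteDotB_apply, Pi.single_apply, mul_ite, Finset.sum_ite_eq] using this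

lemma delsarteDotB_refl (K : Type) [Field K] (n : ℕ) :
    (delsarteDotB K n).IsRefl := by
  intro x y hxy
  simpa [delsarteDotB_apply, mul_comm] using hxy

theorem delsarte_dual_subfield_subcode_eq_trace_dual
    (r h n : ℕ) (hh : 1 ≤ h) (hpp : ∃ p k : ℕ, p.Prime ∧ 0 < k ∧ r = p ^ k)
    (Fr Fq : Type) [Field Fr] [Field Fq] [Fintype Fr] [Fintype Fq] [Algebra Fr Fq]
    (hcr : Fintype.card Fr = r) (hcq : Fintype.card Fq = r ^ h)
    (C : Submodule Fq (Fin n → Fq)) :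
    {x : Fin n → Fr | ∀ v : Fin n → Fr,
        ((fun i => algebraMap Fr Fq (v i)) ∈ C) → ∑ i, x i * v i = 0}
      = {v : Fin n → Fr | ∃ c : Fin n → Fq,
          (∀ u ∈ C, ∑ i, c i * u i = 0) ∧ ∀ i, v i = Algebra.trace Fr Fq (c i)} := by
  classical
  set Bq := delsarteDotB Fq n
  set Br := delsarteDotB Fr n
  -- the embedding map
  let e : (Fin n → Fr) →ₗ[Fr] (Fin n → Fq) :=
    { toFun := fun v i => algebraMap Fr Fq (v i)
      map_add' := fun v w => by funext i; simp
      map_smul' := fun a v => by funext i; simp [Algebra.smul_def] }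
  -- the componentwise trace map
  let tr : (Fin n → Fq) →ₗ[Fr] (Fin n → Fr) :=
    { toFun := fun c i => Algebra.trace Fr Fq (c i)
      map_add' := fun c d => by funext i; simp
      map_smul' := fun a c => by funext i; simp }
  -- subfield subcode and the Fq-dual code
  let S : Submodule Fr (Fin n → Fr) := (C.restrictScalars Fr).comap e
  let D : Submodule Fq (Fin n → Fq) := Bq.orthogonal C
  let T : Submodule Fr (Fin n → Fr) := (D.restrictScalars Fr).map tr
  have hCD : Bq.orthogonal D = C :=
    LinearMap.BilinForm.orthogonal_orthogonal (delsarteDotB_nondeg Fq n)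
      (delsarteDotB_refl Fq n) C
  -- trace of dot products
  have htr : ∀ (c : Fin n → Fq) (v : Fin n → Fr),
      (∑ i, Algebra.trace Fr Fq (c i) * v i)
        = Algebra.trace Fr Fq (∑ i, c i * algebraMap Fr Fq (v i)) := by
    intro c v
    rw [map_sum]
    refine Finset.sum_congr rfl fun i _ => ?_
    rw [mul_comm (c i), ← Algebra.smul_def, map_smul]
    simp [mul_comm, Algebra.smul_def]
  -- key step: the orthogonal of the trace code is the subfield subcode
  have key : Br.orthogonal T = S := by
    ext v
    constructor
    · intro hv
      -- show e v ∈ C; use C = Bq.orthogonal D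
      show e v ∈ C.restrictScalars Fr
      rw [Submodule.restrictScalars_mem, ← hCD]
      intro c hc
      -- want : ∑ i, c i * algebraMap Fr Fq (v i) = 0
      have hall : ∀ a : Fq,
          Algebra.traceForm Fr Fq (∑ i, c i * algebraMap Fr Fq (v i)) a = 0 := by
        intro a
        have hac : a • c ∈ D := D.smul_mem a hc
        have hT : tr (a • c) ∈ T := Submodule.mem_map_of_mem (by exact hac)
        have h2 : (∑ i, Algebra.trace Fr Fq ((a • c) i) * v i) = 0 := hv (tr (a • c)) hT
        rw [htr] at h2
        rw [Algebra.traceForm_apply]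
        have : (∑ i, c i * algebraMap Fr Fq (v i)) * a
            = ∑ i, (a • c) i * algebraMap Fr Fq (v i) := by
          rw [Finset.sum_mul]
          refine Finset.sum_congr rfl fun i _ => ?_
          simp [Pi.smul_apply, smul_eq_mul]; ring
        rw [this]
        exact h2
      exact (traceForm_nondegenerate Fr Fq).1 _ hall
    · intro hv t ht
      obtain ⟨c, hc, rfl⟩ := ht
      have hcD : c ∈ D := hc
      rw [LinearMap.BilinForm.mem_orthogonal_iff] at hcD
      have hev : e v ∈ C := hv
      have h0 : ∑ i, c i * algebraMap Fr Fq (v i) = 0 :=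
        delsarteDotB_refl Fq n _ _ (hcD (e v) hev)
      show (∑ i, Algebra.trace Fr Fq (c i) * v i) = 0
      rw [htr, h0, map_zero]
  have main : (Br.orthogonal S : Set (Fin n → Fr)) = (T : Set (Fin n → Fr)) := by
    rw [← key, LinearMap.BilinForm.orthogonal_orthogonal (delsarteDotB_nondeg Fr n)
      (delsarteDotB_refl Fr n) T]
  -- identify both sides of the goal with these submodules
  have hL : {x : Fin n → Fr | ∀ v : Fin n → Fr,
        ((fun i => algebraMap Fr Fq (v i)) ∈ C) → ∑ i, x i * v i = 0}
      = (Br.orthogonal S : Set (Fin n → Fr)) := by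
    ext x
    simp only [Set.mem_setOf_eq, SetLike.mem_coe, LinearMap.BilinForm.mem_orthogonal_iff]
    constructor
    · intro hx s hs
      show (∑ i, s i * x i) = 0
      rw [Finset.sum_congr rfl fun i _ => mul_comm (s i) (x i)]
      exact hx s hs
    · intro hx v hv
      have h1 : (∑ i, v i * x i) = 0 := hx v hv
      rw [Finset.sum_congr rfl fun i _ => mul_comm (x i) (v i)]
      exact h1
  have hR : {v : Fin n → Fr | ∃ c : Fin n → Fq,
          (∀ u ∈ C, ∑ i, c i * u i = 0) ∧ ∀ i, v i = Algebra.trace Fr Fq (c i)}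
      = (T : Set (Fin n → Fr)) := by
    ext v
    simp only [Set.mem_setOf_eq, SetLike.mem_coe]
    constructor
    · rintro ⟨c, hc1, hc2⟩
      refine ⟨c, ?_, ?_⟩
      · show c ∈ D
        rw [LinearMap.BilinForm.mem_orthogonal_iff]
        intro u hu
        show (∑ i, u i * c i) = 0
        rw [Finset.sum_congr rfl fun i _ => mul_comm (u i) (c i)]
        exact hc1 u hu
      · funext i; exact (hc2 i).symm
    · rintro ⟨c, hc, rfl⟩
      have hcD : c ∈ D := hc
      rw [LinearMap.BilinForm.mem_orthogonal_iff] at hcD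
      refine ⟨c, fun u hu => ?_, fun i => rfl⟩
      have h1 : (∑ i, u i * c i) = 0 := hcD u hu
      rw [Finset.sum_congr rfl fun i _ => mul_comm (c i) (u i)]
      exact h1
  rw [hL, hR, main]
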